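/- Let r be odd, β ∈ M_N(o_r) regular, C = C_{GL_N(o_r)}(β), l' = (r−1)/2, l = l'+1. Suppose P_β is the (unique) p-Sylow subgroup of C and J ⊆ K^{l'} is a subgroup containing (C ∩ K^{l'})K^l with J normalized by P_β. Then the index [P_β K^{l'} : P_β J] equals [K^{l'} : J]; equivalently, P_β ∩ J = P_β ∩ K^{l'}. -/

import Mathlib

open IsLocalRing

/-- The principal congruence subgroup `1 + J^i · M_N(R)` inside `GL_N(R)`,
for an ideal `J` of a commutative ring `R`. -/
def congrSubgroup (N : ℕ) (R : Type) [CommRing R] (J : Ideal R) (i : ℕ) :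
    Subgroup (GL (Fin N) R) where
  carrier := {u | ∀ a b, ((u : Matrix (Fin N) (Fin N) R) - 1) a b ∈ J ^ i}
  one_mem' := by intro a b; simp
  mul_mem' := by
    intro u v hu hv a b
    have h : ((↑(u * v) : Matrix (Fin N) (Fin N) R) - 1)
        = ((↑u : Matrix (Fin N) (Fin N) R) - 1) * ((↑v : Matrix (Fin N) (Fin N) R) - 1)
          + (((↑u : Matrix (Fin N) (Fin N) R) - 1) + ((↑v : Matrix (Fin N) (Fin N) R) - 1)) := by
      rw [Units.val_mul]; noncomm_ring
    rw [h, Matrix.add_apply, Matrix.add_apply]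
    refine Ideal.add_mem _ ?_ (Ideal.add_mem _ (hu a b) (hv a b))
    rw [Matrix.mul_apply]
    exact Ideal.sum_mem _ fun c _ => Ideal.mul_mem_left _ _ (hv c b)
  inv_mem' := by
    intro u hu a b
    have h : ((↑u⁻¹ : Matrix (Fin N) (Fin N) R) - 1)
        = -((↑u⁻¹ : Matrix (Fin N) (Fin N) R) * ((↑u : Matrix (Fin N) (Fin N) R) - 1)) := by
      have huu : (↑u⁻¹ : Matrix (Fin N) (Fin N) R) * (↑u : Matrix (Fin N) (Fin N) R) = 1 := by
        rw [← Units.val_mul, inv_mul_cancel, Units.val_one]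
      noncomm_ring [huu]
    rw [h, Matrix.neg_apply, Matrix.mul_apply]
    exact neg_mem (Ideal.sum_mem _ fun c _ => Ideal.mul_mem_left _ _ (hu c b))

/-- Reduction mod the maximal ideal, `𝔬/𝔭^r → 𝔬/𝔭`. -/
noncomputable def resRed (o : Type) [CommRing o] [IsLocalRing o] (r : ℕ) (hr : r ≠ 0) :
    (o ⧸ (maximalIdeal o) ^ r) →+* ResidueField o :=
  Ideal.Quotient.lift _ (IsLocalRing.residue o) fun a ha =>
    Ideal.Quotient.eq_zero_iff_mem.mpr (Ideal.pow_le_self hr ha)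

lemma mem_congrSubgroup_iff {N : ℕ} {R : Type} [CommRing R] {J : Ideal R} {i : ℕ}
    {u : GL (Fin N) R} :
    u ∈ congrSubgroup N R J i ↔ ∀ a b, ((u : Matrix (Fin N) (Fin N) R) - 1) a b ∈ J ^ i :=
  Iff.rfl

lemma congrSubgroup_normal (N : ℕ) (R : Type) [CommRing R] (J : Ideal R) (i : ℕ) :
    (congrSubgroup N R J i).Normal := by
  constructor
  intro u hu g a b
  have h : ((↑(g * u * g⁻¹) : Matrix (Fin N) (Fin N) R) - 1)
      = (↑g : Matrix (Fin N) (Fin N) R) * ((↑u : Matrix (Fin N) (Fin N) R) - 1)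
        * (↑g⁻¹ : Matrix (Fin N) (Fin N) R) := by
    have hgg : (↑g : Matrix (Fin N) (Fin N) R) * (↑g⁻¹ : Matrix (Fin N) (Fin N) R) = 1 := by
      rw [← Units.val_mul, mul_inv_cancel, Units.val_one]
    simp only [Units.val_mul]
    noncomm_ring [hgg]
  rw [h, Matrix.mul_apply]
  refine Ideal.sum_mem _ fun c _ => Ideal.mul_mem_right _ _ ?_
  rw [Matrix.mul_apply]
  exact Ideal.sum_mem _ fun d _ => Ideal.mul_mem_left _ _ (hu d c)

lemma finite_quot_pow (o : Type) [CommRing o] [IsDomain o] [IsDiscreteValuationRing o]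
    [Finite (ResidueField o)] : ∀ n : ℕ, Finite (o ⧸ (maximalIdeal o) ^ n) := by
  intro n
  induction n with
  | zero =>
    have h : (maximalIdeal o) ^ 0 = ⊤ := (pow_zero _).trans Ideal.one_eq_top
    have : Subsingleton (o ⧸ (maximalIdeal o) ^ 0) := Ideal.Quotient.subsingleton_iff.mpr h
    exact Finite.of_subsingleton
  | succ n ih =>
    obtain ⟨π, hπ⟩ := IsDiscreteValuationRing.exists_irreducible o
    have hm : maximalIdeal o = Ideal.span {π} := hπ.maximalIdeal_eq
    have hmn : (maximalIdeal o) ^ n = Ideal.span ({π ^ n} : Set o) := by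
      rw [hm, Ideal.span_singleton_pow]
    set I : Ideal (o ⧸ (maximalIdeal o) ^ (n + 1)) :=
      ((maximalIdeal o) ^ n).map (Ideal.Quotient.mk ((maximalIdeal o) ^ (n + 1))) with hIdef
    have hle : (maximalIdeal o) ^ (n + 1) ≤ (maximalIdeal o) ^ n :=
      Ideal.pow_le_pow_right (by omega)
    have hq : Finite ((o ⧸ (maximalIdeal o) ^ (n + 1)) ⧸ I) :=
      Finite.of_equiv _ (DoubleQuot.quotQuotEquivQuotOfLE hle).toEquiv.symm
    have hmem : ∀ x : o, Ideal.Quotient.mk ((maximalIdeal o) ^ (n + 1)) (π ^ n * x) ∈ I := by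
      intro x
      exact Ideal.mem_map_of_mem _ (hmn ▸ Ideal.mem_span_singleton'.mpr ⟨x, mul_comm x _⟩)
    set f : o → I := fun x => ⟨Ideal.Quotient.mk _ (π ^ n * x), hmem x⟩ with hfdef
    have hf : ∀ x y : o, x - y ∈ maximalIdeal o → f x = f y := by
      intro x y hxy
      apply Subtype.ext
      show Ideal.Quotient.mk _ _ = Ideal.Quotient.mk _ _
      rw [Ideal.Quotient.eq]
      have h1 : π ^ n * x - π ^ n * y = π ^ n * (x - y) := by ring
      rw [h1, pow_succ]
      exact Ideal.mul_mem_mul (hmn ▸ Ideal.mem_span_singleton'.mpr ⟨1, one_mul _⟩)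
        (hm ▸ hxy)
    have hI : Finite I := by
      refine Finite.of_surjective (fun y : ResidueField o => f y.out) ?_
      rintro ⟨z, hz⟩
      obtain ⟨y, hy, rfl⟩ :=
        (Ideal.mem_map_iff_of_surjective _ Ideal.Quotient.mk_surjective).mp hz
      rw [hmn] at hy
      obtain ⟨x, rfl⟩ := Ideal.mem_span_singleton'.mp hy
      refine ⟨IsLocalRing.residue o x, ?_⟩
      have hout : (IsLocalRing.residue o x).out - x ∈ maximalIdeal o :=
        Ideal.Quotient.eq.mp (Quotient.out_eq' _)
      show f (Quotient.out (IsLocalRing.residue o x)) = _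
      rw [hf _ x hout]
      apply Subtype.ext
      show Ideal.Quotient.mk _ (π ^ n * x) = Ideal.Quotient.mk _ (x * π ^ n)
      rw [mul_comm]
    exact Finite.of_ideal_quotient I

/-- Let `r` be odd, `β` regular, `C = C_{GL_N(𝔬_r)}(β)`, `P_β` the unique `p`-Sylow
subgroup of `C`, and `J ⊆ K^{l'}` a subgroup containing `(C ∩ K^{l'})K^l` normalised by
`P_β`.  Then `[P_β K^{l'} : P_β J] = [K^{l'} : J]`; equivalently `P_β ∩ J = P_β ∩ K^{l'}`. -/
theorem index_PbetaJ_eq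
    (o : Type) [CommRing o] [IsDomain o] [IsDiscreteValuationRing o]
    [Finite (ResidueField o)] (N r : ℕ) (hN : 2 ≤ N) (hr : 2 ≤ r)
    (p : ℕ) (hp : p.Prime) (hchar : CharP (ResidueField o) p)
    (l l' : ℕ) (hodd : 2 * l' + 1 = r) (hl : l = l' + 1)
    (β : Matrix (Fin N) (Fin N) (o ⧸ (maximalIdeal o) ^ r))
    (hreg : Module.finrank (ResidueField o)
      ↥(Subalgebra.centralizer (ResidueField o)
        ({(resRed o r (by omega)).mapMatrix β} :
          Set (Matrix (Fin N) (Fin N) (ResidueField o)))) = N)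
    (C : Subgroup (GL (Fin N) (o ⧸ (maximalIdeal o) ^ r)))
    (hC : ∀ g, g ∈ C ↔
      Commute (g : Matrix (Fin N) (Fin N) (o ⧸ (maximalIdeal o) ^ r)) β)
    (Pβ : Subgroup (GL (Fin N) (o ⧸ (maximalIdeal o) ^ r)))
    (hPβC : Pβ ≤ C) (hPβp : IsPGroup p Pβ)
    (hPβmax : ∀ Q : Subgroup (GL (Fin N) (o ⧸ (maximalIdeal o) ^ r)),
      Q ≤ C → IsPGroup p Q → Q ≤ Pβ)
    (J : Subgroup (GL (Fin N) (o ⧸ (maximalIdeal o) ^ r)))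
    (hJup : J ≤ congrSubgroup N _
      ((maximalIdeal o).map (Ideal.Quotient.mk ((maximalIdeal o) ^ r))) l')
    (hJdown : (C ⊓ congrSubgroup N _
        ((maximalIdeal o).map (Ideal.Quotient.mk ((maximalIdeal o) ^ r))) l') ⊔
      congrSubgroup N _
        ((maximalIdeal o).map (Ideal.Quotient.mk ((maximalIdeal o) ^ r))) l ≤ J)
    (hJnorm : ∀ g ∈ Pβ, ∀ u ∈ J, g * u * g⁻¹ ∈ J) :
    (Pβ ⊔ J).relIndex
        (Pβ ⊔ congrSubgroup N _
          ((maximalIdeal o).map (Ideal.Quotient.mk ((maximalIdeal o) ^ r))) l')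
      = J.relIndex (congrSubgroup N _
          ((maximalIdeal o).map (Ideal.Quotient.mk ((maximalIdeal o) ^ r))) l') ∧
    Pβ ⊓ J = Pβ ⊓ congrSubgroup N _
      ((maximalIdeal o).map (Ideal.Quotient.mk ((maximalIdeal o) ^ r))) l' := by
  classical
  set R := o ⧸ (maximalIdeal o) ^ r with hR
  set 𝔪 : Ideal R := (maximalIdeal o).map (Ideal.Quotient.mk ((maximalIdeal o) ^ r)) with h𝔪
  set K : Subgroup (GL (Fin N) R) := congrSubgroup N R 𝔪 l' with hK'
  haveI hKnormal : K.Normal := congrSubgroup_normal N R 𝔪 l'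
  haveI : Finite R := finite_quot_pow o r
  haveI : Finite (GL (Fin N) R) := inferInstance
  -- `Pβ ⊓ K ≤ J`
  have hPKJ : Pβ ⊓ K ≤ J := by
    intro x hx
    rw [Subgroup.mem_inf] at hx
    exact hJdown (Subgroup.mem_sup_left (Subgroup.mem_inf.mpr ⟨hPβC hx.1, hx.2⟩))
  -- second part
  have part2 : Pβ ⊓ J = Pβ ⊓ K := by
    refine le_antisymm (inf_le_inf_left _ hJup) ?_
    intro x hx
    rw [Subgroup.mem_inf] at hx ⊢
    exact ⟨hx.1, hPKJ (Subgroup.mem_inf.mpr hx)⟩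
  refine ⟨?_, part2⟩
  -- `Pβ ⊔ J` normalizes `J`
  have hnorm : Pβ ⊔ J ≤ Subgroup.normalizer (J : Set (GL (Fin N) R)) := by
    refine sup_le ?_ Subgroup.le_normalizer
    intro g hg
    rw [Subgroup.mem_normalizer_iff]
    intro h
    constructor
    · exact fun hh => hJnorm g hg h hh
    · intro hh
      have := hJnorm g⁻¹ (inv_mem hg) _ hh
      simpa [mul_assoc] using this
  set L : Subgroup (GL (Fin N) R) := Pβ ⊔ J with hL
  haveI hJL : (J.subgroupOf L).Normal := by
    constructor
    rintro ⟨x, hx⟩ hxJ ⟨g, hg⟩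
    simp only [Subgroup.mem_subgroupOf] at hxJ ⊢
    exact (Subgroup.mem_normalizer_iff.mp (hnorm hg) x).mp hxJ
  -- `J.relIndex (Pβ ⊔ J) = J.relIndex Pβ`
  have hPL : Pβ ≤ L := le_sup_left
  have hJLle : J ≤ L := le_sup_right
  have e1 : J.relIndex L = J.relIndex Pβ := by
    have h1 : J.relIndex L = (J.subgroupOf L).index := rfl
    have h2 : (J.subgroupOf L).index = (J.subgroupOf L).relIndex ⊤ :=
      (Subgroup.relIndex_top_right _).symm
    have h3 : (⊤ : Subgroup L) = Pβ.subgroupOf L ⊔ J.subgroupOf L := by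
      rw [← Subgroup.subgroupOf_sup hPL hJLle, ← hL, Subgroup.subgroupOf_self]
    have h4 : (J.subgroupOf L).relIndex (Pβ.subgroupOf L ⊔ J.subgroupOf L)
        = (J.subgroupOf L).relIndex (Pβ.subgroupOf L) :=
      Subgroup.relIndex_sup_right _ _
    rw [h1, h2, h3, h4, Subgroup.relIndex_subgroupOf hPL]
  -- `K.relIndex (Pβ ⊔ K) = K.relIndex Pβ`
  have e2 : K.relIndex (Pβ ⊔ K) = K.relIndex Pβ := Subgroup.relIndex_sup_right _ _
  -- `J.relIndex Pβ = K.relIndex Pβ`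
  have e3 : J.relIndex Pβ = K.relIndex Pβ := by
    rw [← Subgroup.inf_relIndex_right J Pβ, ← Subgroup.inf_relIndex_right K Pβ,
      inf_comm J Pβ, inf_comm K Pβ, part2]
  have hJK : J ≤ K := hJup
  have hKPK : K ≤ Pβ ⊔ K := le_sup_right
  have hLPK : L ≤ Pβ ⊔ K := sup_le le_sup_left (hJK.trans le_sup_right)
  have a1 : J.relIndex K * K.relIndex (Pβ ⊔ K) = J.relIndex (Pβ ⊔ K) :=
    Subgroup.relIndex_mul_relIndex _ _ _ hJK hKPK
  have a2 : J.relIndex L * L.relIndex (Pβ ⊔ K) = J.relIndex (Pβ ⊔ K) :=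
    Subgroup.relIndex_mul_relIndex _ _ _ hJLle hLPK
  have hn0 : K.relIndex (Pβ ⊔ K) ≠ 0 := Subgroup.index_ne_zero_of_finite
  have key : J.relIndex K * K.relIndex (Pβ ⊔ K)
      = K.relIndex (Pβ ⊔ K) * L.relIndex (Pβ ⊔ K) := by
    rw [a1, ← a2, e1, e3, ← e2]
  rw [mul_comm] at key
  exact (Nat.eq_of_mul_eq_mul_left (Nat.pos_of_ne_zero hn0) key.symm)
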